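/- A Markov kernel M : X → Y between metric measure spaces is nonexpansive under precomposition for the order-p Wasserstein metric (i.e., W_p(M·N, M·N') ≤ W_p(N,N') for all kernels N, N' : Y → Z into any metric measure space Z) if and only if M is measure-decreasing: μ_X M ≤ μ_Y. -/

import Mathlib

open ProbabilityTheory MeasureTheory ENNReal

def kernelCouplings {X Y : Type*} [MeasurableSpace X] [MeasurableSpace Y]
    (M N : Kernel X Y) : Set (Kernel X (Y × Y)) :=
  {Pi | IsMarkovKernel Pi ∧ Pi.map Prod.fst = M ∧ Pi.map Prod.snd = N}

noncomputable def kernelWasserstein {X Y : Type*} [MeasurableSpace X] [MeasurableSpace Y]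
    (μX : Measure X) (dY : Y → Y → ℝ≥0∞) (p : ℝ) (M N : Kernel X Y) : ℝ≥0∞ :=
  ⨅ Pi ∈ kernelCouplings M N,
    (∫⁻ x, ∫⁻ q, dY q.1 q.2 ^ p ∂(Pi x) ∂μX) ^ (1 / p)

/-- A Markov kernel `M : X → Y` is nonexpansive under precomposition for the order-`p`
Wasserstein metric (for all targets `Z` and all Markov kernels `N, N' : Y → Z`) if and only
if it is measure-decreasing: `μX · M ≤ μY`. -/
theorem kernelWasserstein_precomp_nonexpansive_iff_measure_decreasing
    {X Y : Type} [MeasurableSpace X] [MeasurableSpace Y]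
    (μX : Measure X) (μY : Measure Y) [SigmaFinite μX] [SigmaFinite μY]
    (p : ℝ) (hp : 1 ≤ p)
    (M : Kernel X Y) [IsMarkovKernel M] :
    (∀ (Z : Type) [MeasurableSpace Z] (dZ : Z → Z → ℝ≥0∞),
        Measurable (fun q : Z × Z => dZ q.1 q.2) →
        ∀ (N N' : Kernel Y Z), IsMarkovKernel N → IsMarkovKernel N' →
          kernelWasserstein μX dZ p (N ∘ₖ M) (N' ∘ₖ M) ≤
            kernelWasserstein μY dZ p N N') ↔
      μX.bind M ≤ μY := by
  classical
  have hp0 : (0:ℝ) < p := lt_of_lt_of_le one_pos hp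
  have hp0' : p ≠ 0 := ne_of_gt hp0
  constructor
  · intro h
    rw [Measure.le_iff]
    intro B hB
    -- detect B by a two-point target
    set f : Y → Bool := fun y => if y ∈ B then true else false with hfdef
    have hf : Measurable f := Measurable.ite hB measurable_const measurable_const
    set dZ : Bool → Bool → ℝ≥0∞ := fun a b => if a = b then 0 else 1 with hdZdef
    have hd : Measurable (fun q : Bool × Bool => dZ q.1 q.2) := .of_discrete
    set N : Kernel Y Bool := Kernel.deterministic f hf with hNdef
    set N' : Kernel Y Bool := Kernel.deterministic (fun _ => false) measurable_const
      with hN'def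
    have key := h Bool dZ hd N N' inferInstance inferInstance
    -- upper bound for the right-hand side
    have hub : kernelWasserstein μY dZ p N N' ≤ (μY B) ^ (1 / p) := by
      set Pi0 : Kernel Y (Bool × Bool) :=
        Kernel.deterministic (fun y => (f y, false)) (hf.prodMk measurable_const) with hPi0
      have hmem : Pi0 ∈ kernelCouplings N N' := by
        refine ⟨inferInstance, ?_, ?_⟩
        · rw [hPi0, ← Kernel.deterministic_comp_eq_map measurable_fst,
            Kernel.deterministic_comp_deterministic]
          rfl
        · rw [hPi0, ← Kernel.deterministic_comp_eq_map measurable_snd,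
            Kernel.deterministic_comp_deterministic]
          rfl
      have hcost : (∫⁻ y, ∫⁻ q, dZ q.1 q.2 ^ p ∂(Pi0 y) ∂μY) = μY B := by
        have : ∀ y, (∫⁻ q, dZ q.1 q.2 ^ p ∂(Pi0 y)) = B.indicator 1 y := by
          intro y
          rw [hPi0, Kernel.lintegral_deterministic]
          by_cases hy : y ∈ B <;>
            simp [hfdef, hdZdef, hy, ENNReal.zero_rpow_of_pos hp0]
        rw [lintegral_congr this, lintegral_indicator_one hB]
      calc kernelWasserstein μY dZ p N N'
          ≤ (∫⁻ y, ∫⁻ q, dZ q.1 q.2 ^ p ∂(Pi0 y) ∂μY) ^ (1 / p) := iInf₂_le Pi0 hmem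
        _ = (μY B) ^ (1 / p) := by rw [hcost]
    -- lower bound for the left-hand side
    have hlb : (μX.bind M B) ^ (1 / p) ≤ kernelWasserstein μX dZ p (N ∘ₖ M) (N' ∘ₖ M) := by
      refine le_iInf₂ fun Pi hPi => ?_
      obtain ⟨hMk, h1, h2⟩ := hPi
      refine ENNReal.rpow_le_rpow ?_ (by positivity)
      have hbind : μX.bind M B = ∫⁻ x, M x B ∂μX :=
        Measure.bind_apply hB (Kernel.measurable M).aemeasurable
      rw [hbind]
      refine lintegral_mono fun x => ?_
      have hfst : Pi x {q : Bool × Bool | q.1 = true} = M x B := by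
        have : (Pi.map Prod.fst) x {true} = M x B := by
          rw [h1, Kernel.comp_apply' _ _ _ (by exact MeasurableSet.of_discrete)]
          have : ∀ y, N y {true} = B.indicator 1 y := by
            intro y
            rw [hNdef, Kernel.deterministic_apply' hf _ (by exact MeasurableSet.of_discrete)]
            by_cases hy : y ∈ B <;> simp [hfdef, hy]
          rw [lintegral_congr this, lintegral_indicator_one hB]
        rw [Kernel.map_apply' _ measurable_fst _ (by exact MeasurableSet.of_discrete)] at this
        convert this using 2
        rfl
      have hsnd : Pi x {q : Bool × Bool | q.2 = true} = 0 := by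
        have : (Pi.map Prod.snd) x {true} = 0 := by
          rw [h2, Kernel.comp_apply' _ _ _ (by exact MeasurableSet.of_discrete)]
          have : ∀ y, N' y {true} = 0 := by
            intro y
            rw [hN'def,
              Kernel.deterministic_apply' measurable_const _ (by exact MeasurableSet.of_discrete)]
            simp
          simp [this]
        rw [Kernel.map_apply' _ measurable_snd _ (by exact MeasurableSet.of_discrete)] at this
        convert this using 2
        rfl
      have hsub : {q : Bool × Bool | q.1 = true} ⊆
          {q : Bool × Bool | q.1 ≠ q.2} ∪ {q : Bool × Bool | q.2 = true} := by
        intro q hq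
        by_cases hq2 : q.2 = true
        · exact Or.inr hq2
        · exact Or.inl (by simp_all)
      have hne : Pi x {q : Bool × Bool | q.1 ≠ q.2} ≤ ∫⁻ q, dZ q.1 q.2 ^ p ∂(Pi x) := by
        have hms : MeasurableSet {q : Bool × Bool | q.1 ≠ q.2} := .of_discrete
        rw [← lintegral_indicator_one hms]
        refine lintegral_mono fun q => ?_
        by_cases hq : q.1 = q.2 <;>
          simp [hdZdef, hq, Set.indicator_apply, ENNReal.one_rpow]
      calc M x B = Pi x {q : Bool × Bool | q.1 = true} := hfst.symm
        _ ≤ Pi x ({q : Bool × Bool | q.1 ≠ q.2} ∪ {q : Bool × Bool | q.2 = true}) :=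
            measure_mono hsub
        _ ≤ Pi x {q : Bool × Bool | q.1 ≠ q.2} + Pi x {q : Bool × Bool | q.2 = true} :=
            measure_union_le _ _
        _ = Pi x {q : Bool × Bool | q.1 ≠ q.2} := by rw [hsnd, add_zero]
        _ ≤ _ := hne
    have hchain : (μX.bind M B) ^ (1 / p) ≤ (μY B) ^ (1 / p) :=
      le_trans hlb (le_trans key hub)
    have := ENNReal.rpow_le_rpow hchain (le_of_lt hp0)
    rwa [← ENNReal.rpow_mul, ← ENNReal.rpow_mul, one_div_mul_cancel hp0', ENNReal.rpow_one,
      ENNReal.rpow_one] at this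
  · intro hle Z _ dZ hd N N' hN hN'
    refine le_iInf₂ fun Pi hPi => ?_
    obtain ⟨hMk, h1, h2⟩ := hPi
    haveI := hMk
    have hg : Measurable (fun q : Z × Z => dZ q.1 q.2 ^ p) := hd.pow_const p
    have hmem : (Pi ∘ₖ M) ∈ kernelCouplings (N ∘ₖ M) (N' ∘ₖ M) := by
      refine ⟨inferInstance, ?_, ?_⟩
      · rw [Kernel.map_comp, h1]
      · rw [Kernel.map_comp, h2]
    refine le_trans (iInf₂_le (Pi ∘ₖ M) hmem) ?_
    refine ENNReal.rpow_le_rpow ?_ (by positivity)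
    have hF : Measurable (fun y => ∫⁻ q, dZ q.1 q.2 ^ p ∂(Pi y)) :=
      Measurable.lintegral_kernel hg
    calc (∫⁻ x, ∫⁻ q, dZ q.1 q.2 ^ p ∂((Pi ∘ₖ M) x) ∂μX)
        = ∫⁻ x, ∫⁻ y, ∫⁻ q, dZ q.1 q.2 ^ p ∂(Pi y) ∂(M x) ∂μX := by
          refine lintegral_congr fun x => ?_
          rw [Kernel.lintegral_comp _ _ _ hg]
      _ = ∫⁻ y, ∫⁻ q, dZ q.1 q.2 ^ p ∂(Pi y) ∂(μX.bind M) :=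
          (Measure.lintegral_bind (Kernel.measurable M).aemeasurable hF.aemeasurable).symm
      _ ≤ ∫⁻ y, ∫⁻ q, dZ q.1 q.2 ^ p ∂(Pi y) ∂μY := lintegral_mono' hle le_rfl
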